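/- For the sunlet graph S_n, n ≥ 3, the maximax independence chromatic number satisfies χ^{i-max}(S_n) = χ(S_n) + 1, i.e., equals 3 if n is even and 4 if n is odd. -/

import Mathlib

/-- A set of vertices is independent if no two of its members are adjacent. -/
def IsIndep {V : Type*} (G : SimpleGraph V) (S : Set V) : Prop :=
  S.Pairwise fun u v => ¬ G.Adj u v

/-- The independence number of `G` restricted to the vertex set `R`. -/
noncomputable def indepNumOn {V : Type*} (G : SimpleGraph V) (R : Set V) : ℕ :=
  sSup {k : ℕ | ∃ S : Set V, S ⊆ R ∧ IsIndep G S ∧ S.ncard = k}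

/-- `S` is a maximum independent set of `G` restricted to `R`. -/
def IsMaxIndepOn {V : Type*} (G : SimpleGraph V) (R S : Set V) : Prop :=
  S ⊆ R ∧ IsIndep G S ∧ S.ncard = indepNumOn G R

/-- One step of the maximax independence procedure on remaining vertex set `R`:
remove a maximum independent set `S` chosen so that the remaining graph has
minimum independence number among all choices of maximum independent set. -/
def IsMaximaxStep {V : Type*} (G : SimpleGraph V) (R S : Set V) : Prop :=
  IsMaxIndepOn G R S ∧
    ∀ T : Set V, IsMaxIndepOn G R T → indepNumOn G (R \ S) ≤ indepNumOn G (R \ T)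

/-- `IsMaximaxSeq G R L` : the list `L` of colour classes is obtained by iterating
the maximax independence procedure starting from remaining vertex set `R`,
until no vertex remains. -/
def IsMaximaxSeq {V : Type*} (G : SimpleGraph V) : Set V → List (Set V) → Prop
  | R, [] => R = ∅
  | R, S :: L => S.Nonempty ∧ IsMaximaxStep G R S ∧ IsMaximaxSeq G (R \ S) L

/-- `χ^{i-max}(G) = ℓ` : the maximax independence, maximum proper colouring of `G`
uses exactly `ℓ` colours. -/
def ChiImaxEq {V : Type*} (G : SimpleGraph V) (ℓ : ℕ) : Prop :=
  (∃ L, IsMaximaxSeq G Set.univ L ∧ L.length = ℓ) ∧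
    ∀ L, IsMaximaxSeq G Set.univ L → L.length = ℓ

/-- The sunlet graph: the cycle `Cₙ` on the vertices `Sum.inl i`, with a pendant
vertex `Sum.inr i` attached to each cycle vertex `Sum.inl i`. -/
def sunlet (n : ℕ) : SimpleGraph (Fin n ⊕ Fin n) :=
  SimpleGraph.fromRel (fun a b => match a, b with
    | Sum.inl i, Sum.inl j => (SimpleGraph.cycleGraph n).Adj i j
    | Sum.inl i, Sum.inr j => i = j
    | _, _ => False)


open Set SimpleGraph

set_option linter.unusedSectionVars false


section Generic
variable {V : Type*} [Finite V] {G : SimpleGraph V} {R S : Set V}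

lemma indep_empty (G : SimpleGraph V) : IsIndep G (∅ : Set V) := Set.pairwise_empty _

lemma le_indepNumOn (hS : S ⊆ R) (hi : IsIndep G S) : S.ncard ≤ indepNumOn G R := by
  have hbdd : BddAbove {k : ℕ | ∃ S : Set V, S ⊆ R ∧ IsIndep G S ∧ S.ncard = k} := by
    refine ⟨Nat.card V, ?_⟩
    rintro k ⟨T, hT, hTi, rfl⟩
    simpa [Set.ncard_univ] using Set.ncard_le_ncard (Set.subset_univ T) Set.finite_univ
  exact le_csSup hbdd ⟨S, hS, hi, rfl⟩

/-- a maximum independent set on `R` exists. -/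
lemma indep_singleton (G : SimpleGraph V) (v : V) : IsIndep G {v} := Set.pairwise_singleton _ _

lemma indepNumOn_le {m : ℕ} (h : ∀ S : Set V, S ⊆ R → IsIndep G S → S.ncard ≤ m) :
    indepNumOn G R ≤ m := by
  have hne : {k : ℕ | ∃ S : Set V, S ⊆ R ∧ IsIndep G S ∧ S.ncard = k}.Nonempty :=
    ⟨0, ∅, Set.empty_subset R, indep_empty G, Set.ncard_empty _⟩
  refine csSup_le hne ?_
  rintro k ⟨T, hT, hTi, rfl⟩
  exact h T hT hTi

lemma indepNumOn_eq {m : ℕ} (hS : S ⊆ R) (hi : IsIndep G S) (hc : S.ncard = m)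
    (h : ∀ T : Set V, T ⊆ R → IsIndep G T → T.ncard ≤ m) : indepNumOn G R = m :=
  le_antisymm (indepNumOn_le h) (hc ▸ le_indepNumOn hS hi)

lemma indepNumOn_singleton (G : SimpleGraph V) (v : V) : indepNumOn G {v} = 1 :=
  indepNumOn_eq (le_refl _) (indep_singleton G v) (Set.ncard_singleton v)
    (fun T hT _ => by simpa using Set.ncard_le_ncard hT (Set.finite_singleton v))

lemma maximaxSeq_empty {L : List (Set V)} (h : IsMaximaxSeq G ∅ L) : L = [] := by
  cases L with
  | nil => rfl
  | cons S L =>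
    obtain ⟨⟨v, hv⟩, ⟨⟨hsub, -, -⟩, -⟩, -⟩ := h
    exact absurd (hsub hv) (Set.notMem_empty v)

lemma exists_maxIndepOn (G : SimpleGraph V) (R : Set V) : ∃ S, IsMaxIndepOn G R S := by
  have hne : {k : ℕ | ∃ S : Set V, S ⊆ R ∧ IsIndep G S ∧ S.ncard = k}.Nonempty :=
    ⟨0, ∅, Set.empty_subset R, indep_empty G, Set.ncard_empty _⟩
  have hbdd : BddAbove {k : ℕ | ∃ S : Set V, S ⊆ R ∧ IsIndep G S ∧ S.ncard = k} := by
    refine ⟨Nat.card V, ?_⟩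
    rintro k ⟨T, hT, hTi, rfl⟩
    simpa [Set.ncard_univ] using Set.ncard_le_ncard (Set.subset_univ T) Set.finite_univ
  obtain ⟨S, hS, hSi, hSc⟩ := Nat.sSup_mem hne hbdd
  exact ⟨S, hS, hSi, hSc⟩

lemma exists_maximax_step (G : SimpleGraph V) (R : Set V) : ∃ S, IsMaximaxStep G R S := by
  classical
  set W := {m : ℕ | ∃ T, IsMaxIndepOn G R T ∧ indepNumOn G (R \ T) = m} with hW
  obtain ⟨T₀, hT₀⟩ := exists_maxIndepOn G R
  have hWne : W.Nonempty := ⟨_, T₀, hT₀, rfl⟩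
  obtain ⟨S, hS, hSm⟩ := Nat.sInf_mem hWne
  refine ⟨S, hS, fun T hT => ?_⟩
  rw [hSm]
  exact Nat.sInf_le ⟨T, hT, rfl⟩

lemma exists_maximax_seq (G : SimpleGraph V) (R : Set V) : ∃ L, IsMaximaxSeq G R L := by
  classical
  obtain ⟨k, hk⟩ : ∃ k, R.ncard ≤ k := ⟨R.ncard, le_rfl⟩
  induction k generalizing R with
  | zero =>
    have : R = ∅ := by
      rw [← Set.ncard_eq_zero (Set.toFinite R)]; omega
    exact ⟨[], this⟩
  | succ k ih =>
    by_cases hR : R = ∅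
    · exact ⟨[], hR⟩
    · obtain ⟨S, hS⟩ := exists_maximax_step G R
      have hRne : R.Nonempty := Set.nonempty_iff_ne_empty.mpr hR
      obtain ⟨v, hv⟩ := hRne
      have h1 : 1 ≤ indepNumOn G R := by
        have := le_indepNumOn (G := G) (Set.singleton_subset_iff.mpr hv)
          (Set.pairwise_singleton v _)
        simpa using this
      have hSne : S.Nonempty := by
        rw [← Set.ncard_pos (Set.toFinite S)]
        rw [hS.1.2.2]; omega
      have hcard : (R \ S).ncard ≤ k := by
        have h2 := Set.ncard_diff_add_ncard_of_subset hS.1.1 (Set.toFinite R)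
        have h3 : 0 < S.ncard := (Set.ncard_pos (Set.toFinite S)).mpr hSne
        omega
      obtain ⟨L, hL⟩ := ih (R \ S) hcard
      exact ⟨S :: L, hSne, hS, hL⟩

end Generic

section Cycle
variable {n : ℕ} [NeZero n]

lemma cycle_adj_iff (hn : 2 ≤ n) {i j : Fin n} :
    (cycleGraph n).Adj i j ↔ i = j + 1 ∨ j = i + 1 := by
  have h1 : (1 : Fin n).val = 1 := by
    rw [Fin.val_one']; exact Nat.mod_eq_of_lt (by omega)
  rw [cycleGraph_adj']
  constructor
  · rintro (h | h)
    · left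
      have : i - j = 1 := Fin.ext (by rw [h, h1])
      rw [← this]; abel
    · right
      have : j - i = 1 := Fin.ext (by rw [h, h1])
      rw [← this]; abel
  · rintro (rfl | rfl)
    · left; rw [add_sub_cancel_left, h1]
    · right; rw [add_sub_cancel_left, h1]

lemma fin_one_ne_zero (hn : 2 ≤ n) : (1 : Fin n) ≠ 0 := by
  have h1 : (1 : Fin n).val = 1 := by
    rw [Fin.val_one']; exact Nat.mod_eq_of_lt (by omega)
  intro h
  rw [Fin.ext_iff, h1] at h
  simp at h

lemma indep_of_succ_notMem (hn : 2 ≤ n) {A : Set (Fin n)} (h : ∀ a ∈ A, a + 1 ∉ A) :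
    IsIndep (cycleGraph n) A := by
  intro x hx y hy hne hadj
  rcases (cycle_adj_iff hn).mp hadj with hxy | hxy
  · exact h y hy (hxy ▸ hx)
  · exact h x hx (hxy ▸ hy)

lemma succ_notMem_of_indep (hn : 2 ≤ n) {A : Set (Fin n)} (hA : IsIndep (cycleGraph n) A)
    {a : Fin n} (ha : a ∈ A) : a + 1 ∉ A := by
  intro ha1
  have hne : a ≠ a + 1 := by
    intro h
    exact fin_one_ne_zero hn (left_eq_add.mp h)
  exact hA ha ha1 hne ((cycle_adj_iff hn).mpr (Or.inr rfl))

lemma shift_indep (hn : 2 ≤ n) {A : Set (Fin n)} (hA : IsIndep (cycleGraph n) A) :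
    IsIndep (cycleGraph n) ((· + 1) '' A) := by
  refine indep_of_succ_notMem hn ?_
  rintro x ⟨a, ha, rfl⟩ ⟨b, hb, hab⟩
  have hb' : b = a + 1 := add_right_cancel hab
  exact succ_notMem_of_indep hn hA ha (hb' ▸ hb)

lemma shift_subset_compl (hn : 2 ≤ n) {A : Set (Fin n)} (hA : IsIndep (cycleGraph n) A) :
    (· + 1) '' A ⊆ Aᶜ := by
  rintro x ⟨a, ha, rfl⟩
  exact succ_notMem_of_indep hn hA ha

lemma ncard_shift (A : Set (Fin n)) : ((· + 1) '' A).ncard = A.ncard :=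
  Set.ncard_image_of_injective A (add_left_injective 1)

lemma two_mul_ncard_le (hn : 2 ≤ n) {A : Set (Fin n)} (hA : IsIndep (cycleGraph n) A) :
    2 * A.ncard ≤ n := by
  have hd : Disjoint A ((· + 1) '' A) :=
    Set.disjoint_left.mpr fun x hxA hxS => shift_subset_compl hn hA hxS hxA
  have := Set.ncard_union_eq hd (Set.toFinite _) (Set.toFinite _)
  have hle : (A ∪ (· + 1) '' A).ncard ≤ n := by
    have := Set.ncard_le_ncard (Set.subset_univ (A ∪ (· + 1) '' A)) Set.finite_univ
    simpa [Set.ncard_univ] using this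
  rw [this, ncard_shift] at hle
  omega

def oddSet (n : ℕ) : Set (Fin n) := {i | i.val % 2 = 1}

lemma oddSet_ncard : (oddSet n).ncard = n / 2 := by
  classical
  have : oddSet n = Set.range (fun k : Fin (n / 2) => (⟨2 * k.val + 1, by omega⟩ : Fin n)) := by
    ext i
    simp only [oddSet, Set.mem_setOf_eq, Set.mem_range]
    constructor
    · intro h
      have hi := i.isLt
      refine ⟨⟨i.val / 2, by omega⟩, ?_⟩
      ext
      simp
      omega
    · rintro ⟨k, rfl⟩
      simp
  have hinj : Function.Injective (fun k : Fin (n / 2) => (⟨2 * k.val + 1, by omega⟩ : Fin n)) := by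
    intro a b hab
    have := congrArg Fin.val hab
    simp only [Fin.val] at this
    exact Fin.ext (by omega)
  rw [this, ← Set.image_univ, Set.ncard_image_of_injective _ hinj, Set.ncard_univ,
    Nat.card_eq_fintype_card, Fintype.card_fin]

lemma oddSet_indep (hn : 2 ≤ n) : IsIndep (cycleGraph n) (oddSet n) := by
  refine indep_of_succ_notMem hn ?_
  intro a ha ha1
  have h1 : (1 : Fin n).val = 1 := by
    rw [Fin.val_one']; exact Nat.mod_eq_of_lt (by omega)
  have hv : (a + 1).val = (a.val + 1) % n := by
    rw [Fin.add_def, h1]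
  have := a.isLt
  simp only [oddSet, Set.mem_setOf_eq] at ha ha1
  rw [hv] at ha1
  rcases Nat.lt_or_ge (a.val + 1) n with h | h
  · rw [Nat.mod_eq_of_lt h] at ha1; omega
  · have : a.val + 1 = n := by omega
    rw [this, Nat.mod_self] at ha1; omega

end Cycle

section Cycle2
variable {n : ℕ} [NeZero n]

lemma cycle_indepNumOn_univ (hn : 2 ≤ n) :
    indepNumOn (cycleGraph n) (univ : Set (Fin n)) = n / 2 :=
  indepNumOn_eq (Set.subset_univ _) (oddSet_indep hn) oddSet_ncard
    (fun T _ hT => by have := two_mul_ncard_le hn hT; omega)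

lemma cycle_half_indep (hn : 2 ≤ n) {B : Set (Fin n)} {j : Fin n} (hj : j ∉ B) :
    ∃ T ⊆ B, IsIndep (cycleGraph n) T ∧ B.ncard ≤ 2 * T.ncard := by
  classical
  have h1 : (1 : Fin n).val = 1 := by
    rw [Fin.val_one']; exact Nat.mod_eq_of_lt (by omega)
  set B0 : Set (Fin n) := {i ∈ B | (i - j).val % 2 = 0} with hB0
  set B1 : Set (Fin n) := {i ∈ B | (i - j).val % 2 = 1} with hB1
  have keystep : ∀ i ∈ B, i + 1 ∈ B → ((i + 1) - j).val = (i - j).val + 1 := by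
    intro i hi hi1
    have hij : i ≠ j := fun h => hj (h ▸ hi)
    have hi1j : i + 1 ≠ j := fun h => hj (h ▸ hi1)
    have hd : (i + 1) - j = (i - j) + 1 := by abel
    have hdv : (i - j).val < n := (i - j).isLt
    have hne : (i - j).val ≠ n - 1 := by
      intro h
      apply hi1j
      have : (i + 1) - j = 0 := by
        rw [hd]
        apply Fin.ext
        rw [Fin.add_def, h1, h]
        simp [Nat.sub_add_cancel (show 1 ≤ n by omega)]
      have := sub_eq_zero.mp this
      exact this
    rw [hd]
    show ((i - j) + 1).val = (i - j).val + 1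
    rw [Fin.val_add, h1, Nat.mod_eq_of_lt (by omega)]
  have hind : ∀ C : Set (Fin n), C ⊆ B → (∀ i ∈ C, ∀ i' ∈ C, (i - j).val % 2 = (i' - j).val % 2) →
      IsIndep (cycleGraph n) C := by
    intro C hCB hpar
    refine indep_of_succ_notMem hn ?_
    intro a ha ha1
    have := keystep a (hCB ha) (hCB ha1)
    have := hpar a ha (a + 1) ha1
    omega
  have hunion : B = B0 ∪ B1 := by
    ext i
    simp only [hB0, hB1, Set.mem_union, Set.mem_setOf_eq]
    constructor
    · intro h
      have := Nat.mod_two_eq_zero_or_one ((i - j).val)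
      tauto
    · rintro (h | h) <;> exact h.1
  have hdisj : Disjoint B0 B1 := by
    rw [Set.disjoint_left]
    rintro i ⟨-, h0⟩ ⟨-, h1'⟩
    omega
  have hcards : B.ncard = B0.ncard + B1.ncard := by
    rw [hunion]
    exact Set.ncard_union_eq hdisj (Set.toFinite _) (Set.toFinite _)
  rcases le_total B0.ncard B1.ncard with h | h
  · exact ⟨B1, fun i hi => hi.1, hind B1 (fun i hi => hi.1)
      (fun i hi i' hi' => hi.2.trans hi'.2.symm), by omega⟩
  · exact ⟨B0, fun i hi => hi.1, hind B0 (fun i hi => hi.1)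
      (fun i hi i' hi' => hi.2.trans hi'.2.symm), by omega⟩

lemma ncard_compl_fin (A : Set (Fin n)) : Aᶜ.ncard = n - A.ncard := by
  have := Set.ncard_add_ncard_compl A (Set.toFinite _) (Set.toFinite _)
  rw [Nat.card_eq_fintype_card, Fintype.card_fin] at this
  omega

lemma cycle_indepNumOn_compl (hn : 2 ≤ n) {A : Set (Fin n)} (hA : IsIndep (cycleGraph n) A)
    (hcard : A.ncard = n / 2) : indepNumOn (cycleGraph n) Aᶜ = n / 2 := by
  refine indepNumOn_eq (shift_subset_compl hn hA) (shift_indep hn hA)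
    (by rw [ncard_shift, hcard]) ?_
  intro T _ hT
  have := two_mul_ncard_le hn hT
  omega

lemma compl_eq_shift_of_even (hn : 2 ≤ n) (he : Even n) {A : Set (Fin n)}
    (hA : IsIndep (cycleGraph n) A) (hcard : A.ncard = n / 2) : Aᶜ = (· + 1) '' A := by
  symm
  apply Set.eq_of_subset_of_ncard_le (shift_subset_compl hn hA)
  rw [ncard_shift, hcard, ncard_compl_fin, hcard]
  obtain ⟨m, rfl⟩ := he
  omega

end Cycle2

section Sunlet
variable {n : ℕ} [NeZero n]

lemma sunlet_adj_ll {i j : Fin n} :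
    (sunlet n).Adj (Sum.inl i) (Sum.inl j) ↔ (cycleGraph n).Adj i j := by
  simp only [sunlet, fromRel_adj]
  constructor
  · rintro ⟨hne, h | h⟩
    · exact h
    · exact h.symm
  · intro h
    exact ⟨by simpa using h.ne, Or.inl h⟩

lemma sunlet_adj_lr {i j : Fin n} : (sunlet n).Adj (Sum.inl i) (Sum.inr j) ↔ i = j := by
  simp only [sunlet, fromRel_adj]
  constructor
  · rintro ⟨-, h | h⟩
    · exact h
    · exact h.elim
  · rintro rfl
    exact ⟨by simp, Or.inl rfl⟩

lemma sunlet_adj_rr {i j : Fin n} : ¬ (sunlet n).Adj (Sum.inr i) (Sum.inr j) := by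
  simp only [sunlet, fromRel_adj]
  rintro ⟨-, h | h⟩ <;> exact h

lemma sunlet_adj_rl {i j : Fin n} : (sunlet n).Adj (Sum.inr i) (Sum.inl j) ↔ j = i := by
  rw [SimpleGraph.adj_comm, sunlet_adj_lr]

lemma inl_image_indep_iff {A : Set (Fin n)} :
    IsIndep (sunlet n) (Sum.inl '' A) ↔ IsIndep (cycleGraph n) A := by
  constructor
  · intro h a ha b hb hne hadj
    exact h ⟨a, ha, rfl⟩ ⟨b, hb, rfl⟩ (by simp [hne]) (sunlet_adj_ll.mpr hadj)
  · rintro h x ⟨a, ha, rfl⟩ y ⟨b, hb, rfl⟩ hne hadj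
    exact h ha hb (by rintro rfl; exact hne rfl) (sunlet_adj_ll.mp hadj)

lemma subset_inl_image {B : Set (Fin n)} {S : Set (Fin n ⊕ Fin n)} (hS : S ⊆ Sum.inl '' B) :
    S = Sum.inl '' (Sum.inl ⁻¹' S) ∧ Sum.inl ⁻¹' S ⊆ B := by
  constructor
  · ext x
    constructor
    · intro hx
      obtain ⟨a, -, rfl⟩ := hS hx
      exact ⟨a, hx, rfl⟩
    · rintro ⟨a, ha, rfl⟩
      exact ha
  · intro a ha
    obtain ⟨b, hb, hba⟩ := hS ha
    exact (Sum.inl_injective hba) ▸ hb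

lemma indepNumOn_inl_image (B : Set (Fin n)) :
    indepNumOn (sunlet n) (Sum.inl '' B) = indepNumOn (cycleGraph n) B := by
  unfold indepNumOn
  congr 1
  ext k
  simp only [Set.mem_setOf_eq]
  constructor
  · rintro ⟨S, hS, hSi, rfl⟩
    obtain ⟨hSeq, hpre⟩ := subset_inl_image hS
    refine ⟨Sum.inl ⁻¹' S, hpre, ?_, ?_⟩
    · exact inl_image_indep_iff.mp (hSeq ▸ hSi)
    · conv_rhs => rw [hSeq]
      rw [Set.ncard_image_of_injective _ Sum.inl_injective]
  · rintro ⟨A, hA, hAi, rfl⟩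
    exact ⟨Sum.inl '' A, Set.image_mono hA, inl_image_indep_iff.mpr hAi,
      Set.ncard_image_of_injective _ Sum.inl_injective⟩

end Sunlet

section Sunlet2
variable {n : ℕ} [NeZero n]

lemma sunlet_indep_ncard_le (hn : 2 ≤ n) {S : Set (Fin n ⊕ Fin n)}
    (hi : IsIndep (sunlet n) S) : S.ncard ≤ n := by
  have hinj : Set.InjOn (Sum.elim id id) S := by
    rintro x hx y hy hxy
    match x, y with
    | Sum.inl i, Sum.inl j =>
      simp only [Sum.elim_inl, id_eq] at hxy
      rw [hxy]
    | Sum.inr i, Sum.inr j =>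
      simp only [Sum.elim_inr, id_eq] at hxy
      rw [hxy]
    | Sum.inl i, Sum.inr j =>
      simp only [Sum.elim_inl, Sum.elim_inr, id] at hxy
      subst hxy
      exact absurd (sunlet_adj_lr.mpr rfl) (hi hx hy (by simp))
    | Sum.inr i, Sum.inl j =>
      simp only [Sum.elim_inl, Sum.elim_inr, id] at hxy
      subst hxy
      exact absurd (sunlet_adj_rl.mpr rfl) (hi hx hy (by simp))
  calc S.ncard = (Sum.elim id id '' S).ncard := (Set.ncard_image_of_injOn hinj).symm
    _ ≤ (univ : Set (Fin n)).ncard := Set.ncard_le_ncard (Set.subset_univ _) Set.finite_univ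
    _ = n := by rw [Set.ncard_univ, Nat.card_eq_fintype_card, Fintype.card_fin]

lemma range_inr_indep : IsIndep (sunlet n) (Set.range (Sum.inr : Fin n → Fin n ⊕ Fin n)) := by
  rintro x ⟨a, rfl⟩ y ⟨b, rfl⟩ hne
  exact sunlet_adj_rr

lemma ncard_range_inr : (Set.range (Sum.inr : Fin n → Fin n ⊕ Fin n)).ncard = n := by
  rw [← Set.image_univ, Set.ncard_image_of_injective _ Sum.inr_injective, Set.ncard_univ,
    Nat.card_eq_fintype_card, Fintype.card_fin]

lemma sunlet_indepNumOn_univ (hn : 2 ≤ n) :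
    indepNumOn (sunlet n) (univ : Set (Fin n ⊕ Fin n)) = n :=
  indepNumOn_eq (Set.subset_univ _) range_inr_indep ncard_range_inr
    (fun T _ hT => sunlet_indep_ncard_le hn hT)

lemma sunlet_maxIndep_structure (hn : 2 ≤ n) {S : Set (Fin n ⊕ Fin n)}
    (hi : IsIndep (sunlet n) S) (hc : S.ncard = n) :
    ∃ A : Set (Fin n), IsIndep (cycleGraph n) A ∧ S = Sum.inl '' A ∪ Sum.inr '' Aᶜ := by
  classical
  set A : Set (Fin n) := {i | Sum.inl i ∈ S} with hA
  set B : Set (Fin n) := {i | Sum.inr i ∈ S} with hB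
  have hSeq : S = Sum.inl '' A ∪ Sum.inr '' B := by
    ext x
    match x with
    | Sum.inl i => simp [hA, hB]
    | Sum.inr i => simp [hA, hB]
  have hdisjim : Disjoint (Sum.inl '' A : Set (Fin n ⊕ Fin n)) (Sum.inr '' B) := by
    rw [Set.disjoint_left]
    rintro x ⟨a, -, rfl⟩ ⟨b, -, h⟩
    exact Sum.inl_ne_inr h.symm
  have hcards : A.ncard + B.ncard = n := by
    have hc' := hc
    rw [hSeq, Set.ncard_union_eq hdisjim (Set.toFinite _) (Set.toFinite _),
      Set.ncard_image_of_injective _ Sum.inl_injective,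
      Set.ncard_image_of_injective _ Sum.inr_injective] at hc'
    exact hc' 
  have hAB : B ⊆ Aᶜ := by
    intro i hiB hiA
    exact hi (show Sum.inl i ∈ S from hiA) (show Sum.inr i ∈ S from hiB) (by simp)
      (sunlet_adj_lr.mpr rfl)
  have hBeq : B = Aᶜ := by
    apply Set.eq_of_subset_of_ncard_le hAB
    rw [ncard_compl_fin]
    omega
  have hAi : IsIndep (cycleGraph n) A := by
    intro a ha b hb hne hadj
    exact hi ha hb (by simp [hne]) (sunlet_adj_ll.mpr hadj)
  exact ⟨A, hAi, by rw [hSeq, hBeq]⟩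

lemma sunlet_univ_diff (A : Set (Fin n)) :
    (univ : Set (Fin n ⊕ Fin n)) \ (Sum.inl '' A ∪ Sum.inr '' Aᶜ) =
      Sum.inl '' Aᶜ ∪ Sum.inr '' A := by
  ext x
  match x with
  | Sum.inl i => simp
  | Sum.inr i => simp

lemma univ_diff_range_inr :
    (univ : Set (Fin n ⊕ Fin n)) \ Set.range Sum.inr = Sum.inl '' univ := by
  ext x
  match x with
  | Sum.inl i => simp
  | Sum.inr i => simp

lemma sunlet_lower_of_ne (hn : 3 ≤ n) {A : Set (Fin n)} (hA : IsIndep (cycleGraph n) A)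
    (hne : A.Nonempty) :
    n / 2 + 1 ≤ indepNumOn (sunlet n) (Sum.inl '' Aᶜ ∪ Sum.inr '' A) := by
  obtain ⟨j, hj⟩ := hne
  have hj' : j ∉ Aᶜ := by simp [hj]
  obtain ⟨T, hTB, hTi, hTc⟩ := cycle_half_indep (show 2 ≤ n by omega) hj'
  have hsub : (Sum.inl '' T ∪ Sum.inr '' A : Set (Fin n ⊕ Fin n)) ⊆
      Sum.inl '' Aᶜ ∪ Sum.inr '' A :=
    Set.union_subset_union (Set.image_mono hTB) subset_rfl
  have hind : IsIndep (sunlet n) (Sum.inl '' T ∪ Sum.inr '' A) := by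
    rintro x (⟨a, ha, rfl⟩ | ⟨a, ha, rfl⟩) y (⟨b, hb, rfl⟩ | ⟨b, hb, rfl⟩) hxy hadj
    · exact hTi ha hb (fun h => hxy (congrArg Sum.inl h)) (sunlet_adj_ll.mp hadj)
    · have h := sunlet_adj_lr.mp hadj
      cases h
      exact (hTB ha) hb
    · have h := sunlet_adj_rl.mp hadj
      cases h
      exact (hTB hb) ha
    · exact sunlet_adj_rr hadj
  have hd : Disjoint (Sum.inl '' T : Set (Fin n ⊕ Fin n)) (Sum.inr '' A) := by
    rw [Set.disjoint_left]
    rintro x ⟨a, -, rfl⟩ ⟨b, -, h⟩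
    exact Sum.inl_ne_inr h.symm
  have hcard : (Sum.inl '' T ∪ Sum.inr '' A : Set (Fin n ⊕ Fin n)).ncard = T.ncard + A.ncard := by
    rw [Set.ncard_union_eq hd (Set.toFinite _) (Set.toFinite _),
      Set.ncard_image_of_injective _ Sum.inl_injective,
      Set.ncard_image_of_injective _ Sum.inr_injective]
  have hnc : n / 2 + 1 ≤ T.ncard + A.ncard := by
    have h2 := two_mul_ncard_le (show 2 ≤ n by omega) hA
    have hAcc : Aᶜ.ncard = n - A.ncard := ncard_compl_fin A
    have hApos : 0 < A.ncard := (Set.ncard_pos (Set.toFinite A)).mpr ⟨j, hj⟩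
    omega
  calc n / 2 + 1 ≤ (Sum.inl '' T ∪ Sum.inr '' A : Set (Fin n ⊕ Fin n)).ncard := by
        rw [hcard]; exact hnc
    _ ≤ indepNumOn (sunlet n) (Sum.inl '' Aᶜ ∪ Sum.inr '' A) := le_indepNumOn hsub hind

end Sunlet2

section Steps
variable {n : ℕ} [NeZero n]

lemma inl_image_univ_diff (A : Set (Fin n)) :
    (Sum.inl '' univ : Set (Fin n ⊕ Fin n)) \ Sum.inl '' A = Sum.inl '' Aᶜ := by
  rw [← Set.image_diff Sum.inl_injective]
  ext i
  simp

lemma first_step (hn : 3 ≤ n) {S : Set (Fin n ⊕ Fin n)}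
    (hS : IsMaximaxStep (sunlet n) univ S) : S = Set.range Sum.inr := by
  have h2 : 2 ≤ n := by omega
  obtain ⟨⟨hsub, hind, hcard⟩, hmin⟩ := hS
  rw [sunlet_indepNumOn_univ h2] at hcard
  obtain ⟨A, hA, rfl⟩ := sunlet_maxIndep_structure h2 hind hcard
  rcases Set.eq_empty_or_nonempty A with rfl | hAne
  · rw [Set.image_empty, Set.empty_union, Set.compl_empty, Set.image_univ]
  · exfalso
    have hT : IsMaxIndepOn (sunlet n) univ (Set.range Sum.inr) :=
      ⟨Set.subset_univ _, range_inr_indep, by rw [ncard_range_inr, sunlet_indepNumOn_univ h2]⟩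
    have hle := hmin _ hT
    rw [univ_diff_range_inr, indepNumOn_inl_image, cycle_indepNumOn_univ h2,
      sunlet_univ_diff] at hle
    have := sunlet_lower_of_ne hn hA hAne
    omega

lemma second_step (hn : 3 ≤ n) {S : Set (Fin n ⊕ Fin n)}
    (hS : IsMaximaxStep (sunlet n) (Sum.inl '' univ) S) :
    ∃ A : Set (Fin n), IsIndep (cycleGraph n) A ∧ A.ncard = n / 2 ∧ S = Sum.inl '' A := by
  have h2 : 2 ≤ n := by omega
  obtain ⟨⟨hsub, hind, hcard⟩, -⟩ := hS
  rw [indepNumOn_inl_image, cycle_indepNumOn_univ h2] at hcard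
  obtain ⟨hSeq, -⟩ := subset_inl_image hsub
  refine ⟨Sum.inl ⁻¹' S, inl_image_indep_iff.mp (hSeq ▸ hind), ?_, hSeq⟩
  rw [hSeq, Set.ncard_image_of_injective _ Sum.inl_injective] at hcard
  exact hcard

lemma sunlet_seq_length (hn : 3 ≤ n) {L : List (Set (Fin n ⊕ Fin n))}
    (hL : IsMaximaxSeq (sunlet n) univ L) :
    L.length = if Even n then 3 else 4 := by
  have h2 : 2 ≤ n := by omega
  have hzero : (0 : ℕ) < n := by omega
  cases L with
  | nil =>
    exact absurd hL (Set.nonempty_iff_ne_empty.mp ⟨Sum.inl ⟨0, hzero⟩, trivial⟩)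
  | cons S1 L1 =>
  obtain ⟨-, hstep1, hL1⟩ := hL
  have h1 := first_step hn hstep1
  subst h1
  rw [univ_diff_range_inr] at hL1
  cases L1 with
  | nil =>
    exact absurd hL1 (Set.nonempty_iff_ne_empty.mp ⟨Sum.inl ⟨0, hzero⟩, ⟨0, hzero⟩, trivial, rfl⟩)
  | cons S2 L2 =>
  obtain ⟨-, hstep2, hL2⟩ := hL1
  obtain ⟨A, hA, hAcard, h2eq⟩ := second_step hn hstep2
  subst h2eq
  rw [inl_image_univ_diff] at hL2
  have hn2pos : 1 ≤ n / 2 := by omega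
  have halpha : indepNumOn (sunlet n) (Sum.inl '' Aᶜ) = n / 2 := by
    rw [indepNumOn_inl_image, cycle_indepNumOn_compl h2 hA hAcard]
  by_cases he : Even n
  · -- even case : the complement is itself independent
    have hAc_card : Aᶜ.ncard = n / 2 := by
      rw [ncard_compl_fin, hAcard]
      obtain ⟨m, rfl⟩ := he
      omega
    cases L2 with
    | nil =>
      exfalso
      have hne : (Sum.inl '' Aᶜ : Set (Fin n ⊕ Fin n)).Nonempty := by
        apply Set.nonempty_of_ncard_ne_zero
        rw [Set.ncard_image_of_injective _ Sum.inl_injective, hAc_card]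
        omega
      exact absurd hL2 (Set.nonempty_iff_ne_empty.mp hne)
    | cons S3 L3 =>
    obtain ⟨-, ⟨⟨hsub3, hind3, hcard3⟩, -⟩, hL3⟩ := hL2
    rw [halpha] at hcard3
    have hS3 : S3 = Sum.inl '' Aᶜ := by
      apply Set.eq_of_subset_of_ncard_le hsub3
      rw [Set.ncard_image_of_injective _ Sum.inl_injective, hAc_card, hcard3]
    rw [hS3, Set.diff_self] at hL3
    rw [maximaxSeq_empty hL3]
    simp [he]
  · -- odd case
    have hAc_card : Aᶜ.ncard = n / 2 + 1 := by
      rw [ncard_compl_fin, hAcard]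
      rw [Nat.not_even_iff_odd] at he
      obtain ⟨m, rfl⟩ := he
      omega
    cases L2 with
    | nil =>
      exfalso
      have hne : (Sum.inl '' Aᶜ : Set (Fin n ⊕ Fin n)).Nonempty := by
        apply Set.nonempty_of_ncard_ne_zero
        rw [Set.ncard_image_of_injective _ Sum.inl_injective, hAc_card]
        omega
      exact absurd hL2 (Set.nonempty_iff_ne_empty.mp hne)
    | cons S3 L3 =>
    obtain ⟨-, ⟨⟨hsub3, hind3, hcard3⟩, -⟩, hL3⟩ := hL2
    rw [halpha] at hcard3
    obtain ⟨hS3eq, hpre3⟩ := subset_inl_image hsub3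
    have hD_card : (Sum.inl ⁻¹' S3).ncard = n / 2 := by
      rw [hS3eq, Set.ncard_image_of_injective _ Sum.inl_injective] at hcard3
      exact hcard3
    have hrem : Sum.inl '' Aᶜ \ S3 = Sum.inl '' (Aᶜ \ Sum.inl ⁻¹' S3) := by
      conv_lhs => rw [hS3eq]
      rw [← Set.image_diff Sum.inl_injective]
    have hrem_card : (Aᶜ \ Sum.inl ⁻¹' S3).ncard = 1 := by
      rw [Set.ncard_diff hpre3 (Set.toFinite _), hAc_card, hD_card]
      omega
    obtain ⟨w, hw⟩ := Set.ncard_eq_one.mp hrem_card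
    rw [hrem, hw, Set.image_singleton] at hL3
    cases L3 with
    | nil =>
      exact absurd hL3 (Set.nonempty_iff_ne_empty.mp ⟨Sum.inl w, rfl⟩)
    | cons S4 L4 =>
    obtain ⟨-, ⟨⟨hsub4, hind4, hcard4⟩, -⟩, hL4⟩ := hL3
    rw [indepNumOn_singleton] at hcard4
    have hS4 : S4 = {Sum.inl w} := by
      apply Set.eq_of_subset_of_ncard_le hsub4
      rw [Set.ncard_singleton, hcard4]
    rw [hS4, Set.diff_self] at hL4
    rw [maximaxSeq_empty hL4]
    simp [he]

end Steps

theorem sunlet_chiImax (n : ℕ) (hn : 3 ≤ n) :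
    (Even n → ChiImaxEq (sunlet n) 3) ∧ (Odd n → ChiImaxEq (sunlet n) 4) := by
  haveI : NeZero n := ⟨by omega⟩
  obtain ⟨L₀, hL₀⟩ := exists_maximax_seq (sunlet n) (univ : Set (Fin n ⊕ Fin n))
  constructor
  · intro he
    refine ⟨⟨L₀, hL₀, ?_⟩, fun L hL => ?_⟩
    · rw [sunlet_seq_length hn hL₀, if_pos he]
    · rw [sunlet_seq_length hn hL, if_pos he]
  · intro ho
    have he : ¬ Even n := Nat.not_even_iff_odd.mpr ho
    refine ⟨⟨L₀, hL₀, ?_⟩, fun L hL => ?_⟩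
    · rw [sunlet_seq_length hn hL₀, if_neg he]
    · rw [sunlet_seq_length hn hL, if_neg he]
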